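/- Let E be a real Banach space, T₀ > 0, and let S : [0,T₀] → (E →L[ℝ] E) be such that (t,y) ↦ S(t)y is continuous and sup_{t∈[0,T₀]} ‖S(t)‖ < ∞. Let Q : ℝ → ℝ be continuous, g : [0,T₀] → E continuous, and u₀ ∈ E. Define u : [0,T₀] → E by u(t) = ∫₀ᵗ S(t−s) g(s) ds + S(t) u₀, and define S^Q(t) y = ∫₀ᵗ Q(t−s) S(s) y ds for y ∈ E. Then for every t ∈ [0,T₀]: ∫₀ᵗ Q(t−s) u(s) ds = ∫₀ᵗ S^Q(t−s) g(s) ds + S^Q(t) u₀. -/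
import Mathlib
open MeasureTheory intervalIntegral Set

lemma triangle_aux {E : Type*} [NormedAddCommGroup E] [NormedSpace ℝ E] [CompleteSpace E]
    {f : ℝ → ℝ → E} {t : ℝ} (ht : 0 ≤ t)
    (hcont : ContinuousOn (fun p : ℝ × ℝ => f p.1 p.2)
      {p : ℝ × ℝ | 0 ≤ p.2 ∧ p.2 ≤ p.1 ∧ p.1 ≤ t}) :
    IntervalIntegrable (fun s => ∫ r in (0:ℝ)..s, f s r) volume 0 t ∧
    (∫ s in (0:ℝ)..t, ∫ r in (0:ℝ)..s, f s r) = ∫ r in (0:ℝ)..t, ∫ s in r..t, f s r := by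
  set T : Set (ℝ × ℝ) := {p : ℝ × ℝ | 0 ≤ p.2 ∧ p.2 ≤ p.1 ∧ p.1 ≤ t} with hTdef
  have hTc : IsClosed T :=
    (isClosed_le continuous_const continuous_snd).inter
      ((isClosed_le continuous_snd continuous_fst).inter
        (isClosed_le continuous_fst continuous_const))
  have hTsub : T ⊆ Icc (0, 0) (t, t) := by
    rintro ⟨s, r⟩ ⟨h1, h2, h3⟩
    exact ⟨⟨le_trans h1 h2, h1⟩, ⟨h3, le_trans h2 h3⟩⟩
  have hTcomp : IsCompact T := (isCompact_Icc).of_isClosed_subset hTc hTsub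
  have hTm : MeasurableSet T := hTc.measurableSet
  set F : ℝ × ℝ → E := T.indicator (fun p => f p.1 p.2) with hFdef
  have hFi : Integrable F volume :=
    (hcont.integrableOn_compact hTcomp).integrable_indicator hTm
  have hFi' : Integrable (Function.uncurry fun s r => F (s, r))
      ((volume : Measure ℝ).prod volume) := by
    rw [← Measure.volume_eq_prod]
    exact hFi
  -- sections in r, for fixed s ∈ Ioc 0 t
  have hsec1 : ∀ s ∈ Ioc (0:ℝ) t, (∫ r, F (s, r)) = ∫ r in (0:ℝ)..s, f s r := by
    intro s hs
    have : F ∘ (fun r => ((s : ℝ), r)) = (Icc (0:ℝ) s).indicator (fun r => f s r) := by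
      funext r
      by_cases h : r ∈ Icc (0:ℝ) s
      · have hmem : ((s : ℝ), r) ∈ T := ⟨h.1, h.2, hs.2⟩
        simp [F, Function.comp, Set.indicator_of_mem hmem, Set.indicator_of_mem h]
      · have hmem : ((s : ℝ), r) ∉ T := by
          intro hc
          exact h ⟨hc.1, hc.2.1⟩
        simp [F, Function.comp, Set.indicator_of_notMem hmem, Set.indicator_of_notMem h]
    calc (∫ r, F (s, r)) = ∫ r, (Icc (0:ℝ) s).indicator (fun r => f s r) r := by
            rw [← this]; rfl
      _ = ∫ r in Icc (0:ℝ) s, f s r := integral_indicator measurableSet_Icc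
      _ = ∫ r in Ioc (0:ℝ) s, f s r := integral_Icc_eq_integral_Ioc
      _ = ∫ r in (0:ℝ)..s, f s r := (intervalIntegral.integral_of_le hs.1.le).symm
  -- sections in s, for fixed r ∈ Ioc 0 t
  have hsec2 : ∀ r ∈ Ioc (0:ℝ) t, (∫ s, F (s, r)) = ∫ s in r..t, f s r := by
    intro r hr
    have : (fun s => F (s, r)) = (Icc r t).indicator (fun s => f s r) := by
      funext s
      by_cases h : s ∈ Icc r t
      · have hmem : ((s : ℝ), r) ∈ T := ⟨hr.1.le, h.1, h.2⟩
        simp [F, Set.indicator_of_mem hmem, Set.indicator_of_mem h]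
      · have hmem : ((s : ℝ), r) ∉ T := by
          intro hc
          exact h ⟨hc.2.1, hc.2.2⟩
        simp [F, Set.indicator_of_notMem hmem, Set.indicator_of_notMem h]
    calc (∫ s, F (s, r)) = ∫ s, (Icc r t).indicator (fun s => f s r) s := by rw [← this]
      _ = ∫ s in Icc r t, f s r := integral_indicator measurableSet_Icc
      _ = ∫ s in Ioc r t, f s r := integral_Icc_eq_integral_Ioc
      _ = ∫ s in r..t, f s r := (intervalIntegral.integral_of_le hr.2).symm
  -- integrability part
  have hGint : Integrable (fun s => ∫ r, F (s, r)) volume := by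
    have := hFi'.integral_prod_left
    simpa [Function.uncurry] using this
  have hII : IntervalIntegrable (fun s => ∫ r in (0:ℝ)..s, f s r) volume 0 t := by
    rw [intervalIntegrable_iff_integrableOn_Ioc_of_le ht]
    refine (hGint.integrableOn).congr ?_
    filter_upwards [ae_restrict_mem measurableSet_Ioc] with s hs
    exact hsec1 s hs
  refine ⟨hII, ?_⟩
  -- vanishing of the r-section integral outside Icc 0 t
  have hzero1 : ∀ s ∉ Icc (0:ℝ) t, (∫ r, F (s, r)) = 0 := by
    intro s hs
    have : ∀ r, F (s, r) = 0 := by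
      intro r
      apply Set.indicator_of_notMem
      intro hc
      exact hs ⟨le_trans hc.1 hc.2.1, hc.2.2⟩
    simp [this]
  have hzero2 : ∀ r ∉ Icc (0:ℝ) t, (∫ s, F (s, r)) = 0 := by
    intro r hr
    have : ∀ s, F (s, r) = 0 := by
      intro s
      apply Set.indicator_of_notMem
      intro hc
      exact hr ⟨hc.1, le_trans hc.2.1 hc.2.2⟩
    simp [this]
  have key : (∫ s, ∫ r, F (s, r)) = ∫ r, ∫ s, F (s, r) :=
    MeasureTheory.integral_integral_swap hFi'
  calc (∫ s in (0:ℝ)..t, ∫ r in (0:ℝ)..s, f s r)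
      = ∫ s in Ioc (0:ℝ) t, ∫ r in (0:ℝ)..s, f s r := intervalIntegral.integral_of_le ht
    _ = ∫ s in Ioc (0:ℝ) t, ∫ r, F (s, r) :=
        setIntegral_congr_fun measurableSet_Ioc (fun s hs => (hsec1 s hs).symm)
    _ = ∫ s in Icc (0:ℝ) t, ∫ r, F (s, r) := integral_Icc_eq_integral_Ioc.symm
    _ = ∫ s, ∫ r, F (s, r) := by
        rw [← MeasureTheory.integral_indicator measurableSet_Icc]
        congr 1
        funext s
        by_cases h : s ∈ Icc (0:ℝ) t
        · rw [Set.indicator_of_mem h]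
        · rw [Set.indicator_of_notMem h, (hzero1 s h).symm]
    _ = ∫ r, ∫ s, F (s, r) := key
    _ = ∫ r in Icc (0:ℝ) t, ∫ s, F (s, r) := by
        rw [← MeasureTheory.integral_indicator measurableSet_Icc]
        congr 1
        funext r
        by_cases h : r ∈ Icc (0:ℝ) t
        · rw [Set.indicator_of_mem h]
        · rw [Set.indicator_of_notMem h, (hzero2 r h).symm]
    _ = ∫ r in Ioc (0:ℝ) t, ∫ s, F (s, r) := integral_Icc_eq_integral_Ioc
    _ = ∫ r in Ioc (0:ℝ) t, ∫ s in r..t, f s r :=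
        setIntegral_congr_fun measurableSet_Ioc (fun r hr => hsec2 r hr)
    _ = ∫ r in (0:ℝ)..t, ∫ s in r..t, f s r := (intervalIntegral.integral_of_le ht).symm

/-- if `u(t) = ∫₀ᵗ S(t-s) g(s) ds + S(t) u₀` and
`S^Q(t) y = ∫₀ᵗ Q(t-s) S(s) y ds`, then
`∫₀ᵗ Q(t-s) u(s) ds = ∫₀ᵗ S^Q(t-s) g(s) ds + S^Q(t) u₀` on `[0, T₀]`. -/
theorem stmt_8
    (E : Type*) [NormedAddCommGroup E] [NormedSpace ℝ E] [CompleteSpace E]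
    (T₀ : ℝ) (hT₀ : 0 < T₀)
    (S : ℝ → E →L[ℝ] E)
    (hScont : ContinuousOn (fun p : ℝ × E => S p.1 p.2) (Set.Icc 0 T₀ ×ˢ Set.univ))
    (hSbdd : ∃ M : ℝ, ∀ t ∈ Set.Icc (0 : ℝ) T₀, ‖S t‖ ≤ M)
    (Q : ℝ → ℝ) (hQ : Continuous Q)
    (g : ℝ → E) (hg : ContinuousOn g (Set.Icc 0 T₀))
    (u₀ : E)
    (u : ℝ → E)
    (hu : ∀ t ∈ Set.Icc (0 : ℝ) T₀,
      u t = (∫ s in (0 : ℝ)..t, S (t - s) (g s)) + S t u₀)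
    (SQ : ℝ → E → E)
    (hSQ : ∀ (t : ℝ) (y : E), SQ t y = ∫ s in (0 : ℝ)..t, Q (t - s) • S s y) :
    ∀ t ∈ Set.Icc (0 : ℝ) T₀,
      (∫ s in (0 : ℝ)..t, Q (t - s) • u s) =
        (∫ s in (0 : ℝ)..t, SQ (t - s) (g s)) + SQ t u₀ := by
  intro t ht
  obtain ⟨ht0, htT⟩ := ht
  set f : ℝ → ℝ → E := fun s r => Q (t - s) • S (s - r) (g r) with hfdef
  have huIcc : Set.uIcc (0:ℝ) t = Set.Icc 0 t := Set.uIcc_of_le ht0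
  -- continuity on the triangle
  have hcont : ContinuousOn (fun p : ℝ × ℝ => f p.1 p.2)
      {p : ℝ × ℝ | 0 ≤ p.2 ∧ p.2 ≤ p.1 ∧ p.1 ≤ t} := by
    have c1 : Continuous (fun p : ℝ × ℝ => Q (t - p.1)) :=
      hQ.comp (continuous_const.sub continuous_fst)
    have hmap : Set.MapsTo (fun p : ℝ × ℝ => ((p.1 - p.2 : ℝ), g p.2))
        {p : ℝ × ℝ | 0 ≤ p.2 ∧ p.2 ≤ p.1 ∧ p.1 ≤ t} (Set.Icc 0 T₀ ×ˢ Set.univ) := by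
      rintro ⟨s, r⟩ ⟨h1, h2, h3⟩
      exact ⟨⟨sub_nonneg.2 h2, le_trans (le_trans (sub_le_self _ h1) h3) htT⟩, trivial⟩
    have hin : ContinuousOn (fun p : ℝ × ℝ => ((p.1 - p.2 : ℝ), g p.2))
        {p : ℝ × ℝ | 0 ≤ p.2 ∧ p.2 ≤ p.1 ∧ p.1 ≤ t} := by
      refine ContinuousOn.prodMk ((continuous_fst.sub continuous_snd).continuousOn) ?_
      refine hg.comp continuous_snd.continuousOn ?_
      rintro ⟨s, r⟩ ⟨h1, h2, h3⟩
      exact ⟨h1, le_trans (le_trans h2 h3) htT⟩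
    have c2 : ContinuousOn (fun p : ℝ × ℝ => S (p.1 - p.2) (g p.2))
        {p : ℝ × ℝ | 0 ≤ p.2 ∧ p.2 ≤ p.1 ∧ p.1 ≤ t} := hScont.comp hin hmap
    exact c1.continuousOn.smul c2
  obtain ⟨hA_int, hswap⟩ := triangle_aux ht0 hcont
  -- second summand integrable
  have hB_int : IntervalIntegrable (fun s => Q (t - s) • S s u₀) volume 0 t := by
    apply ContinuousOn.intervalIntegrable
    rw [huIcc]
    have c1 : Continuous (fun s : ℝ => Q (t - s)) :=
      hQ.comp (continuous_const.sub continuous_id)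
    have c2 : ContinuousOn (fun s : ℝ => S s u₀) (Set.Icc 0 t) := by
      refine hScont.comp ((continuous_id.prodMk continuous_const).continuousOn) ?_
      intro s hs
      exact ⟨⟨hs.1, le_trans hs.2 htT⟩, trivial⟩
    exact c1.continuousOn.smul c2
  -- rewrite integrand
  have hcongr : (∫ s in (0:ℝ)..t, Q (t - s) • u s)
      = ∫ s in (0: ℝ)..t, ((∫ r in (0:ℝ)..s, f s r) + Q (t - s) • S s u₀) := by
    apply intervalIntegral.integral_congr
    intro s hs
    rw [huIcc] at hs
    show Q (t - s) • u s = (∫ r in (0:ℝ)..s, f s r) + Q (t - s) • S s u₀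
    rw [hu s ⟨hs.1, le_trans hs.2 htT⟩, smul_add]
    congr 1
    rw [← intervalIntegral.integral_smul]
  rw [hcongr, intervalIntegral.integral_add hA_int hB_int, hswap, ← hSQ t u₀]
  congr 1
  apply intervalIntegral.integral_congr
  intro r hr
  rw [huIcc] at hr
  show (∫ s in r..t, f s r) = SQ (t - r) (g r)
  have hsub := intervalIntegral.integral_comp_sub_right
    (a := r) (b := t) (fun σ => Q ((t - r) - σ) • S σ (g r)) r
  have heq : (∫ s in r..t, f s r)
      = ∫ x in r..t, Q ((t - r) - (x - r)) • S (x - r) (g r) := by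
    apply intervalIntegral.integral_congr
    intro x _
    show f x r = Q ((t - r) - (x - r)) • S (x - r) (g r)
    rw [show (t - r) - (x - r) = t - x by ring]
  rw [heq, hsub]
  simp only [sub_self]
  exact (hSQ (t - r) (g r)).symm
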